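/- If ψ : [0,∞) × ℝ → ℝ is continuously differentiable, x : [0,T) → ℝ is differentiable with ψ(0, x(0)) ≥ 0, and there is a locally Lipschitz nondecreasing function α with α(0) = 0 such that d/dt ψ(t, x(t)) + α(ψ(t, x(t))) ≥ 0 for all t ∈ [0,T), then ψ(t, x(t)) ≥ 0 for all t ∈ [0,T). -/

import Mathlib

/-- Comparison-lemma forward invariance: if ψ is C¹, x is differentiable,
ψ(0,x(0)) ≥ 0, and α is locally Lipschitz, nondecreasing with α(0) = 0 such that
d/dt ψ(t,x(t)) + α(ψ(t,x(t))) ≥ 0 on [0,T), then ψ(t,x(t)) ≥ 0 on [0,T). -/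
theorem barrier_comparison_forward_invariance
    (ψ : ℝ → ℝ → ℝ) (hψ : ContDiff ℝ 1 (fun p : ℝ × ℝ => ψ p.1 p.2))
    (x : ℝ → ℝ) (hx : Differentiable ℝ x) (T : ℝ) (hT : 0 < T)
    (α : ℝ → ℝ) (hα : LocallyLipschitz α) (hmono : Monotone α) (hα0 : α 0 = 0)
    (h0 : 0 ≤ ψ 0 (x 0))
    (hineq : ∀ t ∈ Set.Ico (0 : ℝ) T,
      0 ≤ deriv (fun s => ψ s (x s)) t + α (ψ t (x t))) :
    ∀ t ∈ Set.Ico (0 : ℝ) T, 0 ≤ ψ t (x t) := by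
  have hy : Differentiable ℝ (fun s => ψ s (x s)) :=
    (hψ.differentiable one_ne_zero).comp (differentiable_id.prodMk hx)
  intro t₁ ht₁
  by_contra hneg
  push_neg at hneg
  set y : ℝ → ℝ := fun s => ψ s (x s) with hy_def
  set S : Set ℝ := Set.Icc 0 t₁ ∩ {t | 0 ≤ y t} with hS_def
  have hSclosed : IsClosed S := isClosed_Icc.inter (isClosed_le continuous_const hy.continuous)
  have hSne : S.Nonempty := ⟨0, ⟨le_refl 0, ht₁.1⟩, h0⟩
  have hSbdd : BddAbove S := ⟨t₁, fun t ht => ht.1.2⟩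
  set t₀ := sSup S with ht₀_def
  have ht₀S : t₀ ∈ S :=
    (isCompact_Icc.inter_right (isClosed_le continuous_const hy.continuous)).sSup_mem hSne
  have ht₀0 : 0 ≤ y t₀ := ht₀S.2
  have ht₀le : t₀ ≤ t₁ := ht₀S.1.2
  have ht₀lt : t₀ < t₁ := lt_of_le_of_ne ht₀le (fun h => by rw [h] at ht₀0; exact absurd ht₀0 (not_le.mpr hneg))
  have hylt : ∀ t ∈ Set.Ioc t₀ t₁, y t < 0 := by
    intro t ht
    by_contra h
    push_neg at h
    have htS : t ∈ S := ⟨⟨le_trans ht₀S.1.1 ht.1.le, ht.2⟩, h⟩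
    exact absurd (le_csSup hSbdd htS) (not_le.mpr ht.1)
  have hmonoY : MonotoneOn y (Set.Icc t₀ t₁) := by
    apply monotoneOn_of_deriv_nonneg (convex_Icc _ _) hy.continuous.continuousOn
      (hy.differentiableOn.mono (Set.subset_univ _))
    intro t ht
    rw [interior_Icc] at ht
    have htIco : t ∈ Set.Ico (0:ℝ) T :=
      ⟨le_trans ht₀S.1.1 ht.1.le, lt_trans ht.2 ht₁.2⟩
    have h1 := hineq t htIco
    have h2 : α (y t) ≤ 0 := hα0 ▸ hmono (hylt t ⟨ht.1, ht.2.le⟩).le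
    linarith
  have hle := hmonoY (Set.left_mem_Icc.mpr ht₀le) (Set.right_mem_Icc.mpr ht₀le) ht₀le
  linarith [hylt t₁ ⟨ht₀lt, le_refl t₁⟩]
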